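/- Let R be a commutative ring containing an invertible element s such that s^k − s^{−k} is invertible in R for every nonzero integer k, and write {d} := s^d − s^{−d}. Let A be an associative unital R-algebra and P : ℤ² ∖ {0} → A a function such that A is generated as an R-algebra by the elements P(x), and such that for all nonzero x, y with x + y ≠ 0 one has [P(x), P(y)] = {d(x,y)}·P(x+y) (with d(x,y) := x₁y₂ − x₂y₁), while [P(x), P(−x)] = 0 for all x. Define a total preorder ⪯ on ℤ² ∖ {0} by x ⪯ y if and only if the angle of the vector x, measured counterclockwise from the positive horizontal axis and taken in [0, 2π), is less than or equal to the corresponding angle of y. Then A is spanned as an R-module by 1 together with all products P(x₁)P(x₂)⋯P(x_n) with n ≥ 1 and x₁ ⪯ x₂ ⪯ … ⪯ x_n. -/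

import Mathlib

/-- `{d} := s^d - s^{-d}` for an invertible element `s` of a commutative ring. -/
def brace {R : Type*} [CommRing R] (s : Rˣ) (d : ℤ) : R :=
  ((s ^ d : Rˣ) : R) - ((s ^ (-d) : Rˣ) : R)

/-- The angle of a lattice vector, measured counterclockwise from the positive
horizontal axis and taken in `[0, 2π)`. -/
noncomputable def latticeAngle (x : ℤ × ℤ) : ℝ :=
  let a := Complex.arg (⟨(x.1 : ℝ), (x.2 : ℝ)⟩ : ℂ)
  if 0 ≤ a then a else a + 2 * Real.pi

open Classical in
/-- number of inversions w.r.t. latticeAngle -/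
noncomputable def numInv : List (ℤ × ℤ) → ℕ
  | [] => 0
  | x :: t => t.countP (fun y => decide (latticeAngle y < latticeAngle x)) + numInv t

open Classical in
lemma numInv_le : ∀ l : List (ℤ × ℤ), numInv l ≤ l.length ^ 2
  | [] => by simp [numInv]
  | x :: t => by
      have h1 := List.countP_le_length (l := t)
        (p := fun y => decide (latticeAngle y < latticeAngle x))
      have h2 := numInv_le t
      simp only [numInv, List.length_cons]
      nlinarith

open Classical in
lemma numInv_swap {x y : ℤ × ℤ} (h : latticeAngle y < latticeAngle x) :
    ∀ a b : List (ℤ × ℤ), numInv (a ++ y :: x :: b) + 1 = numInv (a ++ x :: y :: b)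
  | [], b => by
      simp only [List.nil_append, numInv, List.countP_cons, h, h.asymm,
        decide_eq_true_eq, if_pos, if_neg, not_lt_of_gt]
      simp [h, not_lt_of_gt h]
      omega
  | z :: a, b => by
      have hperm : (a ++ y :: x :: b).Perm (a ++ x :: y :: b) :=
        List.Perm.append_left a (List.Perm.swap x y b)
      have hc := hperm.countP_eq (p := fun w => decide (latticeAngle w < latticeAngle z))
      have ih := numInv_swap h a b
      simp only [List.cons_append, numInv, List.append_eq, hc]
      omega

lemma not_chain'_decomp {α : Type*} (r : α → α → Prop) :
    ∀ l : List α, ¬ l.Chain' r → ∃ a x y b, l = a ++ x :: y :: b ∧ ¬ r x y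
  | [] => fun h => absurd List.isChain_nil h
  | [x] => fun h => absurd (List.isChain_singleton x) h
  | x :: y :: t => fun h => by
      rw [List.Chain', List.isChain_cons_cons] at h
      push_neg at h
      by_cases hxy : r x y
      · obtain ⟨a, u, v, b, heq, hr⟩ := not_chain'_decomp r (y :: t) (h hxy)
        exact ⟨x :: a, u, v, b, by rw [List.cons_append, ← heq], hr⟩
      · exact ⟨[], x, y, t, rfl, hxy⟩

theorem stmt_10 {R : Type*} [CommRing R] {A : Type*} [Ring A] [Algebra R A]
    (s : Rˣ) (hinv : ∀ k : ℤ, k ≠ 0 → IsUnit (brace s k))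
    (P : ℤ × ℤ → A)
    -- A is generated as an R-algebra by the P(x), x ≠ 0
    (hgen : Algebra.adjoin R (P '' {x : ℤ × ℤ | x ≠ 0}) = ⊤)
    -- the commutation relations
    (hrel : ∀ x y : ℤ × ℤ, x ≠ 0 → y ≠ 0 → x + y ≠ 0 →
      P x * P y - P y * P x = brace s (x.1 * y.2 - x.2 * y.1) • P (x + y))
    (hopp : ∀ x : ℤ × ℤ, x ≠ 0 → P x * P (-x) - P (-x) * P x = 0) :
    Submodule.span R
      ({1} ∪ {a : A | ∃ l : List (ℤ × ℤ), l ≠ [] ∧ (∀ x ∈ l, x ≠ 0) ∧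
        l.Chain' (fun x y => latticeAngle x ≤ latticeAngle y) ∧
        a = (l.map P).prod}) = ⊤ := by
  set G : Set A := ({1} ∪ {a : A | ∃ l : List (ℤ × ℤ), l ≠ [] ∧ (∀ x ∈ l, x ≠ 0) ∧
        l.Chain' (fun x y => latticeAngle x ≤ latticeAngle y) ∧
        a = (l.map P).prod}) with hG
  set S : Submodule R A := Submodule.span R G with hSdef
  have hone : (1 : A) ∈ S := Submodule.subset_span (Or.inl rfl)
  have hsorted : ∀ l : List (ℤ × ℤ), l ≠ [] → (∀ x ∈ l, x ≠ 0) →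
      l.Chain' (fun x y => latticeAngle x ≤ latticeAngle y) → (l.map P).prod ∈ S :=
    fun l h1 h2 h3 => Submodule.subset_span (Or.inr ⟨l, h1, h2, h3, rfl⟩)
  have prodeq : ∀ (u v : ℤ × ℤ) (a b : List (ℤ × ℤ)),
      ((a ++ u :: v :: b).map P).prod
        = (a.map P).prod * (P u * P v * (b.map P).prod) := by
    intro u v a b
    simp [List.map_append, List.prod_append, mul_assoc]
  have prodeq1 : ∀ (u : ℤ × ℤ) (a b : List (ℤ × ℤ)),
      ((a ++ u :: b).map P).prod = (a.map P).prod * (P u * (b.map P).prod) := by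
    intro u a b
    simp [List.map_append, List.prod_append, mul_assoc]
  have key : ∀ n : ℕ, ∀ l : List (ℤ × ℤ), l.length ^ 3 + numInv l ≤ n →
      (∀ x ∈ l, x ≠ 0) → (l.map P).prod ∈ S := by
    intro n
    induction n with
    | zero =>
      intro l hμ _
      have hl0 : l = [] := by
        cases l with
        | nil => rfl
        | cons x t => simp at hμ
      subst hl0; simpa using hone
    | succ n ih =>
      intro l hμ hl
      by_cases hs : l.Chain' (fun x y => latticeAngle x ≤ latticeAngle y)
      · rcases eq_or_ne l [] with h0 | h0
        · subst h0; simpa using hone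
        · exact hsorted l h0 hl hs
      · obtain ⟨a, x, y, b, heq, hxy⟩ :=
          not_chain'_decomp (fun x y => latticeAngle x ≤ latticeAngle y) l hs
        push_neg at hxy
        subst heq
        have hx : x ≠ 0 := hl x (by simp)
        have hy : y ≠ 0 := hl y (by simp)
        have hl' : ∀ z ∈ a ++ y :: x :: b, z ≠ 0 := by
          intro z hz; apply hl; simp at hz ⊢; tauto
        have hlen : (a ++ y :: x :: b).length = (a ++ x :: y :: b).length := by simp
        have hinv' := numInv_swap hxy a b
        have hμ' : (a ++ y :: x :: b).length ^ 3 + numInv (a ++ y :: x :: b) ≤ n := by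
          rw [hlen]; omega
        by_cases hxy0 : x + y = 0
        · have hyx : y = -x := eq_neg_of_add_eq_zero_right hxy0
          have hcomm : P x * P y = P y * P x := by
            rw [hyx]; exact sub_eq_zero.mp (hopp x hx)
          rw [prodeq x y, hcomm, ← prodeq y x]
          exact ih _ hμ' hl'
        · have hc : P x * P y
              = P y * P x + brace s (x.1 * y.2 - x.2 * y.1) • P (x + y) := by
            have := hrel x y hx hy hxy0
            rw [← this]; abel
          rw [prodeq x y, hc, add_mul, mul_add, smul_mul_assoc, mul_smul_comm,
            ← prodeq y x, ← prodeq1 (x + y)]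
          apply Submodule.add_mem
          · exact ih _ hμ' hl'
          · apply Submodule.smul_mem
            apply ih
            · have h1 : (a ++ (x + y) :: b).length = a.length + b.length + 1 := by simp; omega
              have h2 : numInv (a ++ (x + y) :: b) ≤ (a.length + b.length + 1) ^ 2 := by
                have := numInv_le (a ++ (x + y) :: b); rw [h1] at this; exact this
              have h3 : (a ++ x :: y :: b).length = a.length + b.length + 2 := by simp; omega
              rw [h3] at hμ
              rw [h1]
              nlinarith [hμ, h2]
            · intro z hz
              simp only [List.mem_append, List.mem_cons] at hz
              rcases hz with h | h | h
              · exact hl z (by simp [h])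
              · subst h; exact hxy0
              · exact hl z (by simp [h])
  have hmulgen : ∀ u ∈ G, ∀ v ∈ G, u * v ∈ S := by
    rintro u hu v hv
    have memprod : ∀ w ∈ G, w ∈ S := fun w hw => Submodule.subset_span hw
    rcases hu with hu1 | ⟨l1, hne1, hz1, hc1, rfl⟩
    · rcases hu1 with rfl
      simpa using memprod v hv
    · rcases hv with hv1 | ⟨l2, hne2, hz2, hc2, rfl⟩
      · rcases hv1 with rfl
        simpa using memprod _ (Or.inr ⟨l1, hne1, hz1, hc1, rfl⟩)
      · have : (l1.map P).prod * (l2.map P).prod = ((l1 ++ l2).map P).prod := by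
          simp [List.map_append, List.prod_append]
        rw [this]
        apply key ((l1 ++ l2).length ^ 3 + numInv (l1 ++ l2)) _ le_rfl
        intro z hz
        simp only [List.mem_append] at hz
        rcases hz with h | h
        · exact hz1 z h
        · exact hz2 z h
  have hmul : ∀ u ∈ S, ∀ v ∈ S, u * v ∈ S := by
    intro u hu v hv
    have : u * v ∈ S * S := Submodule.mul_mem_mul hu hv
    have hSS : S * S ≤ S := by
      rw [hSdef, Submodule.span_mul_span]
      apply Submodule.span_le.mpr
      rintro w ⟨u, hu, v, hv, rfl⟩
      exact hmulgen u hu v hv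
    exact hSS this
  set Salg : Subalgebra R A := S.toSubalgebra hone (fun x y hx hy => hmul x hx y hy)
  have hle : Algebra.adjoin R (P '' {x : ℤ × ℤ | x ≠ 0}) ≤ Salg := by
    apply Algebra.adjoin_le
    rintro _ ⟨x, hx, rfl⟩
    show P x ∈ S
    have := hsorted [x] (by simp) (by simpa using hx) (List.isChain_singleton x)
    simpa using this
  rw [hgen] at hle
  rw [eq_top_iff]
  intro z _
  have hz : z ∈ Salg := by rw [top_le_iff.mp hle]; trivial
  exact hz
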